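/- Let f : R^n → R be L-smooth and ℓ-strongly convex with minimizer x⋆, 0 < γ ≤ 1/L, and suppose the update x⁺ = x − γh satisfies ‖∇f(x) − h‖ ≤ max(r̄‖∇f(x)‖, δ) for constants r̄ ≥ 0 and δ ≥ 0. Then f(x⁺) − f(x⋆) ≤ (1 + γL r̄² − γℓ)(f(x) − f(x⋆)) + γδ²/2. -/

import Mathlib

set_option maxHeartbeats 1000000

open RealInnerProductSpace

section aux

variable {n : ℕ} {f : EuclideanSpace ℝ (Fin n) → ℝ}

lemma aux_line_hasDerivAt (hdiff : Differentiable ℝ f)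
    (x v : EuclideanSpace ℝ (Fin n)) (t : ℝ) :
    HasDerivAt (fun s : ℝ => f (x + s • v)) ⟪gradient f (x + t • v), v⟫ t := by
  have hline : HasDerivAt (fun s : ℝ => x + s • v) v t := by
    simpa using ((hasDerivAt_id t).smul_const v).const_add x
  have hg : HasFDerivAt f (InnerProductSpace.toDual ℝ _ (gradient f (x + t • v))) (x + t • v) :=
    (hdiff (x + t • v)).hasGradientAt.hasFDerivAt
  have := hg.comp_hasDerivAt t hline
  simpa [InnerProductSpace.toDual_apply_apply, Function.comp_def] using this

lemma aux_descent (hdiff : Differentiable ℝ f) {L : ℝ} (hL : 0 < L)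
    (hsmooth : ∀ x y, ‖gradient f x - gradient f y‖ ≤ L * ‖x - y‖)
    (x v : EuclideanSpace ℝ (Fin n)) :
    f (x + v) ≤ f x + ⟪gradient f x, v⟫ + L / 2 * ‖v‖ ^ 2 := by
  set c1 : ℝ := ⟪gradient f x, v⟫ with hc1
  set c2 : ℝ := L / 2 * ‖v‖ ^ 2 with hc2
  set ψ : ℝ → ℝ := fun t => f (x + t • v) - t * c1 - t ^ 2 * c2 with hψ
  have hderiv : ∀ t : ℝ, HasDerivAt ψ
      (⟪gradient f (x + t • v), v⟫ - c1 - 2 * t * c2) t := by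
    intro t
    have h1 := aux_line_hasDerivAt hdiff x v t
    have h2 : HasDerivAt (fun t : ℝ => t * c1) c1 t := by
      simpa using (hasDerivAt_id t).mul_const c1
    have h3 : HasDerivAt (fun t : ℝ => t ^ 2 * c2) (2 * t * c2) t := by
      simpa using (hasDerivAt_pow 2 t).mul_const c2
    exact (h1.sub h2).sub h3
  have hanti : AntitoneOn ψ (Set.Icc (0:ℝ) 1) := by
    apply antitoneOn_of_deriv_nonpos (convex_Icc 0 1)
    · exact fun t _ => ((hderiv t).differentiableAt).continuousAt.continuousWithinAt
    · exact fun t _ => ((hderiv t).differentiableAt).differentiableWithinAt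
    · intro t ht
      rw [interior_Icc] at ht
      rw [(hderiv t).deriv]
      have hb : ⟪gradient f (x + t • v) - gradient f x, v⟫ ≤ L * t * ‖v‖ ^ 2 := by
        calc ⟪gradient f (x + t • v) - gradient f x, v⟫
            ≤ ‖gradient f (x + t • v) - gradient f x‖ * ‖v‖ := real_inner_le_norm _ _
          _ ≤ (L * ‖x + t • v - x‖) * ‖v‖ :=
              mul_le_mul_of_nonneg_right (hsmooth _ x) (norm_nonneg v)
          _ = L * t * ‖v‖ ^ 2 := by
              rw [add_sub_cancel_left, norm_smul, Real.norm_eq_abs, abs_of_pos ht.1]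
              ring
      rw [inner_sub_left] at hb
      have : (2:ℝ) * t * c2 = L * t * ‖v‖ ^ 2 := by rw [hc2]; ring
      linarith
  have h01 := hanti (Set.mem_Icc.2 ⟨le_refl 0, zero_le_one⟩)
      (Set.mem_Icc.2 ⟨zero_le_one, le_refl 1⟩) zero_le_one
  have e1 : ψ 1 = f (x + v) - c1 - c2 := by simp [hψ]
  have e0 : ψ 0 = f x := by simp [hψ]
  rw [e1, e0] at h01
  linarith

lemma aux_strong {ℓ : ℝ} (hdiff : Differentiable ℝ f)
    (hstrong : StrongConvexOn Set.univ ℓ f)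
    (x y : EuclideanSpace ℝ (Fin n)) :
    f x + ⟪gradient f x, y - x⟫ + ℓ / 2 * ‖y - x‖ ^ 2 ≤ f y := by
  set v := y - x with hv
  have hgconv : ConvexOn ℝ Set.univ fun z => f z - ℓ / 2 * ‖z‖ ^ 2 :=
    (strongConvexOn_iff_convex).1 hstrong
  set G : EuclideanSpace ℝ (Fin n) → ℝ := fun z => f z - ℓ / 2 * ‖z‖ ^ 2 with hG
  -- convexity of t ↦ G (x + t • v)
  have hlm : ∀ t : ℝ, (AffineMap.lineMap x y : ℝ →ᵃ[ℝ] _) t = x + t • v := by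
    intro t
    rw [AffineMap.lineMap_apply]
    simp [hv]
    abel
  have hφconv : ConvexOn ℝ Set.univ fun t : ℝ => G (x + t • v) := by
    have hc := hgconv.comp_affineMap (AffineMap.lineMap x y : ℝ →ᵃ[ℝ] _)
    have heq : (G ∘ (AffineMap.lineMap x y : ℝ →ᵃ[ℝ] _)) = fun t : ℝ => G (x + t • v) := by
      funext t
      rw [Function.comp_apply, hlm t]
    rw [heq] at hc
    simpa using hc
  -- derivative of t ↦ G (x + t • v) at 0
  have hq : HasDerivAt (fun t : ℝ => ℓ / 2 * ‖x + t • v‖ ^ 2) (ℓ * ⟪x, v⟫) 0 := by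
    have heq : (fun t : ℝ => ℓ / 2 * ‖x + t • v‖ ^ 2)
        = fun t : ℝ => ℓ / 2 * ‖x‖ ^ 2 + t * (ℓ * ⟪x, v⟫) + t ^ 2 * (ℓ / 2 * ‖v‖ ^ 2) := by
      funext t
      rw [norm_add_sq_real, real_inner_smul_right, norm_smul, Real.norm_eq_abs, mul_pow, sq_abs]
      ring
    rw [heq]
    have hq1 : HasDerivAt (fun t : ℝ => t * (ℓ * ⟪x, v⟫)) (ℓ * ⟪x, v⟫) (0:ℝ) := by
      simpa using (hasDerivAt_id (0:ℝ)).mul_const (ℓ * ⟪x, v⟫)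
    have hq2 : HasDerivAt (fun t : ℝ => t ^ 2 * (ℓ / 2 * ‖v‖ ^ 2)) 0 (0:ℝ) := by
      simpa using (hasDerivAt_pow 2 (0:ℝ)).mul_const (ℓ / 2 * ‖v‖ ^ 2)
    simpa [Pi.add_def] using ((hasDerivAt_const (0:ℝ) (ℓ / 2 * ‖x‖ ^ 2)).add hq1).add hq2
  have hd0 : HasDerivAt (fun t : ℝ => G (x + t • v)) (⟪gradient f x, v⟫ - ℓ * ⟪x, v⟫) 0 := by
    have h1 := aux_line_hasDerivAt hdiff x v 0
    have h2 := h1.sub hq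
    rw [zero_smul, add_zero] at h2
    exact h2
  have hslope := hφconv.le_slope_of_hasDerivAt (Set.mem_univ (0:ℝ)) (Set.mem_univ (1:ℝ))
      zero_lt_one hd0
  have hx1 : x + (1:ℝ) • v = y := by rw [one_smul, hv]; abel
  have hx0 : x + (0:ℝ) • v = x := by rw [zero_smul, add_zero]
  have hslope' : ⟪gradient f x, v⟫ - ℓ * ⟪x, v⟫
      ≤ (f y - ℓ / 2 * ‖y‖ ^ 2) - (f x - ℓ / 2 * ‖x‖ ^ 2) := by
    have hv1 : slope (fun t : ℝ => G (x + t • v)) 0 1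
        = (f y - ℓ / 2 * ‖y‖ ^ 2) - (f x - ℓ / 2 * ‖x‖ ^ 2) := by
      rw [slope_def_field, hx1, hx0]
      norm_num [hG]
    rw [hv1] at hslope
    exact hslope
  have hnorm : ‖y - x‖ ^ 2 = ‖y‖ ^ 2 - 2 * ⟪x, y⟫ + ‖x‖ ^ 2 := by
    rw [norm_sub_sq_real, real_inner_comm]
  have hinner : ⟪x, v⟫ = ⟪x, y⟫ - ‖x‖ ^ 2 := by
    rw [hv, inner_sub_right, real_inner_self_eq_norm_sq]
  rw [hinner] at hslope'
  rw [hnorm]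
  linarith

end aux

/-- unified contraction under mixed relative/absolute gradient error. -/
theorem stmt_18 (n : ℕ) (f : EuclideanSpace ℝ (Fin n) → ℝ) (L ℓ : ℝ)
    (hL : 0 < L) (hℓ : 0 < ℓ)
    (hdiff : Differentiable ℝ f)
    (hsmooth : ∀ x y, ‖gradient f x - gradient f y‖ ≤ L * ‖x - y‖)
    (hstrong : StrongConvexOn Set.univ ℓ f)
    (xstar : EuclideanSpace ℝ (Fin n)) (hmin : IsMinOn f Set.univ xstar)
    (γ rbar δ : ℝ) (hγ0 : 0 < γ) (hγ : γ ≤ 1 / L) (hrbar : 0 ≤ rbar) (hδ : 0 ≤ δ)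
    (x h : EuclideanSpace ℝ (Fin n))
    (herr : ‖gradient f x - h‖ ≤ max (rbar * ‖gradient f x‖) δ) :
    f (x - γ • h) - f xstar
      ≤ (1 + γ * L * rbar ^ 2 - γ * ℓ) * (f x - f xstar) + γ * δ ^ 2 / 2 := by
  set g := gradient f x with hgdef
  -- descent step
  have hdesc := aux_descent hdiff hL hsmooth x (-(γ • h))
  have h1 : f (x - γ • h) ≤ f x - γ * ⟪g, h⟫ + L * γ ^ 2 / 2 * ‖h‖ ^ 2 := by
    rw [← sub_eq_add_neg] at hdesc
    have e1 : ⟪g, -(γ • h)⟫ = -(γ * ⟪g, h⟫) := by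
      rw [inner_neg_right, real_inner_smul_right]
    have e2 : ‖-(γ • h)‖ ^ 2 = γ ^ 2 * ‖h‖ ^ 2 := by
      rw [norm_neg, norm_smul, Real.norm_eq_abs, mul_pow, sq_abs]
    rw [e1, e2] at hdesc
    linarith
  -- PL inequality
  have hPL : 2 * ℓ * (f x - f xstar) ≤ ‖g‖ ^ 2 := by
    have hs := aux_strong hdiff hstrong x xstar
    have hib : -(‖g‖ * ‖xstar - x‖) ≤ ⟪g, xstar - x⟫ := by
      have := real_inner_le_norm g (-(xstar - x))
      rw [inner_neg_right, norm_neg] at this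
      linarith
    nlinarith [sq_nonneg (‖g‖ - ℓ * ‖xstar - x‖), sq_nonneg ‖xstar - x‖]
  -- upper bound on gradient norm
  have hUB : ‖g‖ ^ 2 ≤ 2 * L * (f x - f xstar) := by
    have hd := aux_descent hdiff hL hsmooth x (-((1 / L) • g))
    have e1 : ⟪g, -((1 / L) • g)⟫ = -((1 / L) * ‖g‖ ^ 2) := by
      rw [inner_neg_right, real_inner_smul_right, real_inner_self_eq_norm_sq]
    have e2 : ‖-((1 / L) • g)‖ ^ 2 = (1 / L) ^ 2 * ‖g‖ ^ 2 := by
      rw [norm_neg, norm_smul, Real.norm_eq_abs, mul_pow, sq_abs]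
    rw [e1, e2] at hd
    have hmin' : f xstar ≤ f (x + -((1 / L) • g)) := hmin (Set.mem_univ _)
    have hLne : L ≠ 0 := ne_of_gt hL
    have : f xstar ≤ f x - 1 / (2 * L) * ‖g‖ ^ 2 := by
      have e3 : (1 / L) * ‖g‖ ^ 2 - L / 2 * ((1 / L) ^ 2 * ‖g‖ ^ 2)
          = 1 / (2 * L) * ‖g‖ ^ 2 := by field_simp; ring
      linarith
    have h2L : 0 < 2 * L := by linarith
    have h5 : 1 / (2 * L) * ‖g‖ ^ 2 ≤ f x - f xstar := by linarith
    have h6 := mul_le_mul_of_nonneg_left h5 (le_of_lt h2L)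
    have h7 : 2 * L * (1 / (2 * L) * ‖g‖ ^ 2) = ‖g‖ ^ 2 := by field_simp
    rw [h7] at h6
    exact h6
  -- error bound squared
  have herr2 : ‖g - h‖ ^ 2 ≤ rbar ^ 2 * ‖g‖ ^ 2 + δ ^ 2 := by
    have hsq : ‖g - h‖ ^ 2 ≤ (max (rbar * ‖g‖) δ) ^ 2 :=
      pow_le_pow_left₀ (norm_nonneg _) herr 2
    rcases max_choice (rbar * ‖g‖) δ with hc | hc <;> rw [hc] at hsq <;>
      nlinarith [sq_nonneg (rbar * ‖g‖), sq_nonneg δ]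
  -- polarization
  have hpol : ⟪g, h⟫ = (‖g‖ ^ 2 + ‖h‖ ^ 2 - ‖g - h‖ ^ 2) / 2 := by
    have := norm_sub_sq_real g h
    linarith
  have hγL : γ ^ 2 * L ≤ γ := by
    have hγ1 : γ * L ≤ 1 := by rwa [le_div_iff₀ hL] at hγ
    nlinarith
  have hA : 0 ≤ f x - f xstar := by
    have := hmin (Set.mem_univ x); simp at this; linarith
  have k1 : 0 ≤ (γ - γ ^ 2 * L) * ‖h‖ ^ 2 :=
    mul_nonneg (by linarith) (sq_nonneg _)
  have k2 : γ / 2 * ‖g - h‖ ^ 2 ≤ γ / 2 * (rbar ^ 2 * ‖g‖ ^ 2 + δ ^ 2) :=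
    mul_le_mul_of_nonneg_left herr2 (by linarith)
  have k3 : γ / 2 * (2 * ℓ * (f x - f xstar)) ≤ γ / 2 * ‖g‖ ^ 2 :=
    mul_le_mul_of_nonneg_left hPL (by linarith)
  have k4 : γ * rbar ^ 2 / 2 * ‖g‖ ^ 2 ≤ γ * rbar ^ 2 / 2 * (2 * L * (f x - f xstar)) :=
    mul_le_mul_of_nonneg_left hUB (by positivity)
  have hpolγ : γ * ⟪g, h⟫ = γ / 2 * ‖g‖ ^ 2 + γ / 2 * ‖h‖ ^ 2 - γ / 2 * ‖g - h‖ ^ 2 := by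
    rw [hpol]; ring
  linarith [h1, hpolγ, k1, k2, k3, k4]
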